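/- Let ‖·‖ be a norm on ℝ^d with dual norm ‖·‖_*, and for a d×d matrix H let ‖H‖ := max_{‖x‖ ≤ 1} ‖H x‖_*. Let f : ℝ^d → ℝ be twice continuously differentiable and (L⁰, L¹)-relaxed smooth with respect to ‖·‖, i.e. ‖∇²f(x)‖ ≤ L⁰ + L¹ ‖∇f(x)‖_* for all x, with L⁰ ≥ 0 and L¹ > 0. Then for any x, x' ∈ ℝ^d with ‖x' − x‖ ≤ 1/L¹, one has f(x') ≤ f(x) + ⟨∇f(x), x' − x⟩ + (1/2) (5 L⁰ + 4 L¹ ‖∇f(x)‖_*) ‖x' − x‖². -/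

import Mathlib

open scoped BigOperators

/-- The dual norm of a norm `N` on `ℝ^d`: `‖z‖_* = sup_{N x ≤ 1} ⟪z, x⟫`. -/
noncomputable def dualNorm {d : ℕ} (N : EuclideanSpace ℝ (Fin d) → ℝ)
    (z : EuclideanSpace ℝ (Fin d)) : ℝ :=
  sSup ((fun x => (inner ℝ z x : ℝ)) '' {x | N x ≤ 1})

/-- The matrix norm induced by a norm `N` on `ℝ^d`: `‖H‖ = max_{N x ≤ 1} ‖H x‖_*`,
for a linear map `H` on `ℝ^d`. -/
noncomputable def inducedMatrixNorm {d : ℕ} (N : EuclideanSpace ℝ (Fin d) → ℝ)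
    (H : EuclideanSpace ℝ (Fin d) →L[ℝ] EuclideanSpace ℝ (Fin d)) : ℝ :=
  sSup ((fun x => dualNorm N (H x)) '' {x | N x ≤ 1})

section Aux

variable {d : ℕ} {N : EuclideanSpace ℝ (Fin d) → ℝ}

private lemma N_zero (hN_def : ∀ x, N x = 0 ↔ x = 0) :
    N (0 : EuclideanSpace ℝ (Fin d)) = 0 := (hN_def 0).2 rfl

private lemma N_nonneg (hN_def : ∀ x, N x = 0 ↔ x = 0)
    (hN_smul : ∀ (c : ℝ) x, N (c • x) = |c| * N x)
    (hN_add : ∀ x y, N (x + y) ≤ N x + N y) (x : EuclideanSpace ℝ (Fin d)) :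
    0 ≤ N x := by
  have h1 : N ((-1 : ℝ) • x) = N x := by rw [hN_smul]; norm_num
  have h2 := hN_add x ((-1 : ℝ) • x)
  rw [h1] at h2
  have h3 : x + (-1 : ℝ) • x = 0 := by simp
  rw [h3, N_zero hN_def] at h2
  linarith

private lemma N_le (hN_def : ∀ x, N x = 0 ↔ x = 0)
    (hN_smul : ∀ (c : ℝ) x, N (c • x) = |c| * N x)
    (hN_add : ∀ x y, N (x + y) ≤ N x + N y) :
    ∃ c₂ : ℝ, 0 ≤ c₂ ∧ ∀ x, N x ≤ c₂ * ‖x‖ := by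
  classical
  refine ⟨∑ i, N (EuclideanSpace.single i (1:ℝ)),
    Finset.sum_nonneg fun i _ => N_nonneg hN_def hN_smul hN_add _, fun x => ?_⟩
  have hx : ∑ i, x i • EuclideanSpace.single i (1:ℝ) = x := by
    have := (EuclideanSpace.basisFun (Fin d) ℝ).sum_repr' x
    simpa [EuclideanSpace.basisFun_apply, EuclideanSpace.inner_single_left] using this
  calc N x = N (∑ i, x i • EuclideanSpace.single i (1:ℝ)) := by rw [hx]
    _ ≤ ∑ i, N (x i • EuclideanSpace.single i (1:ℝ)) :=
        Finset.le_sum_of_subadditive N (N_zero hN_def).le hN_add _ _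
    _ = ∑ i, |x i| * N (EuclideanSpace.single i (1:ℝ)) := by
        simp [hN_smul]
    _ ≤ ∑ i, ‖x‖ * N (EuclideanSpace.single i (1:ℝ)) := by
        refine Finset.sum_le_sum fun i _ => ?_
        refine mul_le_mul_of_nonneg_right ?_ (N_nonneg hN_def hN_smul hN_add _)
        have h := abs_real_inner_le_norm (EuclideanSpace.single i (1:ℝ)) x
        simpa [EuclideanSpace.inner_single_left, EuclideanSpace.norm_single] using h
    _ = (∑ i, N (EuclideanSpace.single i (1:ℝ))) * ‖x‖ := by
        rw [← Finset.mul_sum]; ring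

private lemma N_continuous (hN_def : ∀ x, N x = 0 ↔ x = 0)
    (hN_smul : ∀ (c : ℝ) x, N (c • x) = |c| * N x)
    (hN_add : ∀ x y, N (x + y) ≤ N x + N y) :
    Continuous N := by
  obtain ⟨c₂, hc₂0, hc₂⟩ := N_le hN_def hN_smul hN_add
  have key : ∀ a b : EuclideanSpace ℝ (Fin d), N a - N b ≤ c₂ * ‖a - b‖ := by
    intro a b
    have h1 := hN_add b (a - b)
    have h2 := hc₂ (a - b)
    have h3 : b + (a - b) = a := by abel
    rw [h3] at h1
    linarith
  have : LipschitzWith (Real.toNNReal c₂) N := by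
    rw [lipschitzWith_iff_dist_le_mul]
    intro a b
    rw [Real.dist_eq, dist_eq_norm, Real.coe_toNNReal _ hc₂0, abs_sub_le_iff]
    exact ⟨key a b, by rw [norm_sub_rev]; exact key b a⟩
  exact this.continuous

private lemma N_lower (hN_def : ∀ x, N x = 0 ↔ x = 0)
    (hN_smul : ∀ (c : ℝ) x, N (c • x) = |c| * N x)
    (hN_add : ∀ x y, N (x + y) ≤ N x + N y) :
    ∃ c₁ : ℝ, 0 < c₁ ∧ ∀ x, c₁ * ‖x‖ ≤ N x := by
  by_cases hS : (Metric.sphere (0 : EuclideanSpace ℝ (Fin d)) 1).Nonempty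
  · obtain ⟨x₀, hx₀, hmin⟩ := (isCompact_sphere (0 : EuclideanSpace ℝ (Fin d)) 1).exists_isMinOn
      hS (N_continuous hN_def hN_smul hN_add).continuousOn
    have hx₀n : ‖x₀‖ = 1 := by simpa using hx₀
    have hx₀ne : x₀ ≠ 0 := by intro h; rw [h] at hx₀n; simp at hx₀n
    have hpos : 0 < N x₀ :=
      lt_of_le_of_ne (N_nonneg hN_def hN_smul hN_add _)
        (fun h => hx₀ne ((hN_def x₀).1 h.symm))
    refine ⟨N x₀, hpos, fun x => ?_⟩
    rcases eq_or_ne x 0 with rfl | hx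
    · simp [N_zero hN_def]
    · have hnx : 0 < ‖x‖ := norm_pos_iff.2 hx
      have hmem : ‖x‖⁻¹ • x ∈ Metric.sphere (0 : EuclideanSpace ℝ (Fin d)) 1 := by
        simp [mem_sphere_zero_iff_norm, norm_smul, abs_of_pos (inv_pos.2 hnx),
          inv_mul_cancel₀ hnx.ne']
      have h1 : N x₀ ≤ N (‖x‖⁻¹ • x) := isMinOn_iff.mp hmin _ hmem
      rw [hN_smul, abs_of_pos (inv_pos.2 hnx)] at h1
      have := mul_le_mul_of_nonneg_right h1 hnx.le
      rw [mul_comm (‖x‖⁻¹) (N x), mul_assoc, inv_mul_cancel₀ hnx.ne', mul_one] at this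
      exact this
  · refine ⟨1, one_pos, fun x => ?_⟩
    have hx : x = 0 := by
      by_contra hx
      have hnx : 0 < ‖x‖ := norm_pos_iff.2 hx
      exact hS ⟨‖x‖⁻¹ • x, by
        simp [mem_sphere_zero_iff_norm, norm_smul, abs_of_pos (inv_pos.2 hnx),
          inv_mul_cancel₀ hnx.ne']⟩
    subst hx
    simp [N_zero hN_def]

section Dual

variable {d : ℕ} {N : EuclideanSpace ℝ (Fin d) → ℝ} {c₁ : ℝ}

private lemma norm_le_inv (hc₁ : 0 < c₁) (hc₁N : ∀ x, c₁ * ‖x‖ ≤ N x)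
    {x : EuclideanSpace ℝ (Fin d)} (hx : N x ≤ 1) : ‖x‖ ≤ c₁⁻¹ := by
  have h : c₁ * ‖x‖ ≤ 1 := le_trans (hc₁N x) hx
  calc ‖x‖ = c₁⁻¹ * (c₁ * ‖x‖) := by field_simp
    _ ≤ c₁⁻¹ * 1 := mul_le_mul_of_nonneg_left h (inv_pos.2 hc₁).le
    _ = c₁⁻¹ := mul_one _

private lemma dual_bddAbove (hc₁ : 0 < c₁) (hc₁N : ∀ x, c₁ * ‖x‖ ≤ N x)
    (z : EuclideanSpace ℝ (Fin d)) :
    BddAbove ((fun x => (inner ℝ z x : ℝ)) '' {x | N x ≤ 1}) := by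
  refine ⟨‖z‖ * c₁⁻¹, ?_⟩
  rintro _ ⟨x, hx, rfl⟩
  calc (inner ℝ z x : ℝ) ≤ ‖z‖ * ‖x‖ := real_inner_le_norm z x
    _ ≤ ‖z‖ * c₁⁻¹ := mul_le_mul_of_nonneg_left (norm_le_inv hc₁ hc₁N hx) (norm_nonneg z)

private lemma le_dual (hc₁ : 0 < c₁) (hc₁N : ∀ x, c₁ * ‖x‖ ≤ N x)
    (z : EuclideanSpace ℝ (Fin d)) {x : EuclideanSpace ℝ (Fin d)} (hx : N x ≤ 1) :
    (inner ℝ z x : ℝ) ≤ dualNorm N z :=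
  le_csSup (dual_bddAbove hc₁ hc₁N z) ⟨x, hx, rfl⟩

private lemma dual_le (hN_def : ∀ x, N x = 0 ↔ x = 0)
    (z : EuclideanSpace ℝ (Fin d)) {B : ℝ}
    (hB : ∀ x, N x ≤ 1 → (inner ℝ z x : ℝ) ≤ B) : dualNorm N z ≤ B := by
  refine csSup_le (Set.Nonempty.image _ ⟨0, by simp [(hN_def 0).2 rfl]⟩) ?_
  rintro _ ⟨x, hx, rfl⟩; exact hB x hx

private lemma dual_nonneg (hN_def : ∀ x, N x = 0 ↔ x = 0)
    (hc₁ : 0 < c₁) (hc₁N : ∀ x, c₁ * ‖x‖ ≤ N x) (z : EuclideanSpace ℝ (Fin d)) :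
    0 ≤ dualNorm N z := by
  have := le_dual hc₁ hc₁N z (x := 0) (by simp [(hN_def 0).2 rfl])
  simpa using this

private lemma dual_le_norm (hN_def : ∀ x, N x = 0 ↔ x = 0)
    (hc₁ : 0 < c₁) (hc₁N : ∀ x, c₁ * ‖x‖ ≤ N x) (z : EuclideanSpace ℝ (Fin d)) :
    dualNorm N z ≤ ‖z‖ * c₁⁻¹ := by
  refine dual_le hN_def z fun x hx => ?_
  calc (inner ℝ z x : ℝ) ≤ ‖z‖ * ‖x‖ := real_inner_le_norm z x
    _ ≤ ‖z‖ * c₁⁻¹ := mul_le_mul_of_nonneg_left (norm_le_inv hc₁ hc₁N hx) (norm_nonneg z)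

private lemma inner_le_dual_mul (hN_def : ∀ x, N x = 0 ↔ x = 0)
    (hN_smul : ∀ (c : ℝ) x, N (c • x) = |c| * N x)
    (hN_add : ∀ x y, N (x + y) ≤ N x + N y)
    (hc₁ : 0 < c₁) (hc₁N : ∀ x, c₁ * ‖x‖ ≤ N x)
    (z v : EuclideanSpace ℝ (Fin d)) :
    (inner ℝ z v : ℝ) ≤ dualNorm N z * N v := by
  rcases eq_or_ne v 0 with rfl | hv
  · simp [(hN_def 0).2 rfl]
  · have hNv : 0 < N v :=
      lt_of_le_of_ne (N_nonneg hN_def hN_smul hN_add v) (fun h => hv ((hN_def v).1 h.symm))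
    have hmem : N ((N v)⁻¹ • v) ≤ 1 := by
      rw [hN_smul, abs_of_pos (inv_pos.2 hNv), inv_mul_cancel₀ hNv.ne']
    have h := le_dual hc₁ hc₁N z hmem
    rw [real_inner_smul_right] at h
    have h2 := mul_le_mul_of_nonneg_left h hNv.le
    rw [← mul_assoc, mul_inv_cancel₀ hNv.ne', one_mul] at h2
    linarith [h2, mul_comm (N v) (dualNorm N z)]

private lemma dual_sub (hN_def : ∀ x, N x = 0 ↔ x = 0)
    (hc₁ : 0 < c₁) (hc₁N : ∀ x, c₁ * ‖x‖ ≤ N x)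
    (a b : EuclideanSpace ℝ (Fin d)) :
    dualNorm N a ≤ dualNorm N b + dualNorm N (a - b) := by
  refine dual_le hN_def a fun x hx => ?_
  have h : a = b + (a - b) := by abel
  calc (inner ℝ a x : ℝ) = inner ℝ b x + (inner ℝ (a - b) x : ℝ) := by
        rw [← inner_add_left]; rw [← h]
    _ ≤ dualNorm N b + dualNorm N (a - b) :=
        add_le_add (le_dual hc₁ hc₁N b hx) (le_dual hc₁ hc₁N _ hx)

private lemma dual_comp_continuous (hN_def : ∀ x, N x = 0 ↔ x = 0)
    (hc₁ : 0 < c₁) (hc₁N : ∀ x, c₁ * ‖x‖ ≤ N x)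
    {α : Type*} [TopologicalSpace α] {u : α → EuclideanSpace ℝ (Fin d)}
    (hu : Continuous u) : Continuous fun t => dualNorm N (u t) := by
  have key : ∀ a b : EuclideanSpace ℝ (Fin d),
      dualNorm N a - dualNorm N b ≤ ‖a - b‖ * c₁⁻¹ := fun a b => by
    have h1 := dual_sub hN_def hc₁ hc₁N a b
    have h2 := dual_le_norm hN_def hc₁ hc₁N (a - b)
    linarith
  have hlip : LipschitzWith (Real.toNNReal c₁⁻¹) (dualNorm N) := by
    rw [lipschitzWith_iff_dist_le_mul]
    intro a b
    rw [Real.dist_eq, dist_eq_norm, Real.coe_toNNReal _ (inv_pos.2 hc₁).le, abs_sub_le_iff]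
    constructor
    · have := key a b; linarith [this]
    · have := key b a; rw [norm_sub_rev] at this; linarith
  exact (hlip.continuous).comp hu

end Dual

section More

variable {d : ℕ} {N : EuclideanSpace ℝ (Fin d) → ℝ} {c₁ : ℝ}

private lemma dual_intervalIntegral_le (hN_def : ∀ x, N x = 0 ↔ x = 0)
    (hN_smul : ∀ (c : ℝ) x, N (c • x) = |c| * N x)
    (hN_add : ∀ x y, N (x + y) ≤ N x + N y)
    (hc₁ : 0 < c₁) (hc₁N : ∀ x, c₁ * ‖x‖ ≤ N x)
    {u : ℝ → EuclideanSpace ℝ (Fin d)} (hu : Continuous u)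
    {φ : ℝ → ℝ} (hφ : Continuous φ) {a b : ℝ} (hab : a ≤ b)
    (h : ∀ τ ∈ Set.Icc a b, dualNorm N (u τ) ≤ φ τ) :
    dualNorm N (∫ τ in a..b, u τ) ≤ ∫ τ in a..b, φ τ := by
  refine dual_le hN_def _ fun x hx => ?_
  have h1 : (inner ℝ (∫ τ in a..b, u τ) x : ℝ) = ∫ τ in a..b, (inner ℝ (u τ) x : ℝ) := by
    rw [real_inner_comm]
    have hcomm := (innerSL ℝ x).intervalIntegral_comp_comm (μ := MeasureTheory.volume) (hu.intervalIntegrable a b)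
    simp only [innerSL_apply_apply] at hcomm
    rw [← hcomm]
    congr 1
    funext τ
    exact real_inner_comm _ _
  rw [h1]
  refine intervalIntegral.integral_mono_on hab
    (((hu.inner continuous_const)).intervalIntegrable a b)
    (hφ.intervalIntegrable a b) fun τ hτ => ?_
  calc (inner ℝ (u τ) x : ℝ) ≤ dualNorm N (u τ) * N x :=
        inner_le_dual_mul hN_def hN_smul hN_add hc₁ hc₁N _ _
    _ ≤ dualNorm N (u τ) * 1 :=
        mul_le_mul_of_nonneg_left hx (dual_nonneg hN_def hc₁ hc₁N _)
    _ ≤ φ τ := by rw [mul_one]; exact h τ hτ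

private lemma induced_bdd (hN_def : ∀ x, N x = 0 ↔ x = 0)
    (hc₁ : 0 < c₁) (hc₁N : ∀ x, c₁ * ‖x‖ ≤ N x)
    (H : EuclideanSpace ℝ (Fin d) →L[ℝ] EuclideanSpace ℝ (Fin d)) :
    BddAbove ((fun x => dualNorm N (H x)) '' {x | N x ≤ 1}) := by
  refine ⟨(‖H‖ * c₁⁻¹) * c₁⁻¹, ?_⟩
  rintro _ ⟨x, hx, rfl⟩
  calc dualNorm N (H x) ≤ ‖H x‖ * c₁⁻¹ := dual_le_norm hN_def hc₁ hc₁N _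
    _ ≤ (‖H‖ * ‖x‖) * c₁⁻¹ :=
        mul_le_mul_of_nonneg_right (H.le_opNorm x) (inv_pos.2 hc₁).le
    _ ≤ (‖H‖ * c₁⁻¹) * c₁⁻¹ := by
        refine mul_le_mul_of_nonneg_right ?_ (inv_pos.2 hc₁).le
        exact mul_le_mul_of_nonneg_left (norm_le_inv hc₁ hc₁N hx) (norm_nonneg H)

private lemma le_induced (hN_def : ∀ x, N x = 0 ↔ x = 0)
    (hc₁ : 0 < c₁) (hc₁N : ∀ x, c₁ * ‖x‖ ≤ N x)
    (H : EuclideanSpace ℝ (Fin d) →L[ℝ] EuclideanSpace ℝ (Fin d))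
    {x : EuclideanSpace ℝ (Fin d)} (hx : N x ≤ 1) :
    dualNorm N (H x) ≤ inducedMatrixNorm N H :=
  le_csSup (induced_bdd hN_def hc₁ hc₁N H) ⟨x, hx, rfl⟩

private lemma dual_apply_le (hN_def : ∀ x, N x = 0 ↔ x = 0)
    (hN_smul : ∀ (c : ℝ) x, N (c • x) = |c| * N x)
    (hN_add : ∀ x y, N (x + y) ≤ N x + N y)
    (hc₁ : 0 < c₁) (hc₁N : ∀ x, c₁ * ‖x‖ ≤ N x)
    (H : EuclideanSpace ℝ (Fin d) →L[ℝ] EuclideanSpace ℝ (Fin d))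
    (v : EuclideanSpace ℝ (Fin d)) :
    dualNorm N (H v) ≤ inducedMatrixNorm N H * N v := by
  refine dual_le hN_def _ fun x hx => ?_
  rcases eq_or_ne v 0 with rfl | hv
  · simp [(hN_def 0).2 rfl]
  · have hNv : 0 < N v :=
      lt_of_le_of_ne (N_nonneg hN_def hN_smul hN_add v) (fun h => hv ((hN_def v).1 h.symm))
    have hmem : N ((N v)⁻¹ • v) ≤ 1 := by
      rw [hN_smul, abs_of_pos (inv_pos.2 hNv), inv_mul_cancel₀ hNv.ne']
    have h1 : (inner ℝ (H ((N v)⁻¹ • v)) x : ℝ) ≤ inducedMatrixNorm N H :=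
      le_trans (le_dual hc₁ hc₁N _ hx) (le_induced hN_def hc₁ hc₁N H hmem)
    rw [map_smul, real_inner_smul_left] at h1
    have h2 := mul_le_mul_of_nonneg_left h1 hNv.le
    rw [← mul_assoc, mul_inv_cancel₀ hNv.ne', one_mul] at h2
    linarith [mul_comm (N v) (inducedMatrixNorm N H)]

end More

section Calc

variable {d : ℕ}

private noncomputable def toDualSymmCLM :
    StrongDual ℝ (EuclideanSpace ℝ (Fin d)) →L[ℝ] EuclideanSpace ℝ (Fin d) where
  toFun := fun φ => (InnerProductSpace.toDual ℝ (EuclideanSpace ℝ (Fin d))).symm φ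
  map_add' := fun φ ψ => map_add _ _ _
  map_smul' := fun c φ => by
    simpa using (InnerProductSpace.toDual ℝ (EuclideanSpace ℝ (Fin d))).symm.map_smulₛₗ c φ
  cont := (InnerProductSpace.toDual ℝ (EuclideanSpace ℝ (Fin d))).symm.continuous

private lemma contDiff_gradient {f : EuclideanSpace ℝ (Fin d) → ℝ} (hf : ContDiff ℝ 2 f) :
    ContDiff ℝ 1 (gradient f) := by
  have h1 : ContDiff ℝ 1 (fderiv ℝ f) := hf.fderiv_right (by norm_num)
  have h2 : gradient f = fun x => toDualSymmCLM (fderiv ℝ f x) := rfl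
  rw [h2]
  exact toDualSymmCLM.contDiff.comp h1

private lemma fderiv_eq_inner_gradient {f : EuclideanSpace ℝ (Fin d) → ℝ}
    (y v : EuclideanSpace ℝ (Fin d)) :
    fderiv ℝ f y v = (inner ℝ (gradient f y) v : ℝ) := by
  rw [gradient, InnerProductSpace.toDual_symm_apply]

end Calc

set_option maxHeartbeats 1600000 in
private theorem relaxed_aux {d : ℕ}
    (N : EuclideanSpace ℝ (Fin d) → ℝ)
    (hN_def : ∀ x, N x = 0 ↔ x = 0)
    (hN_smul : ∀ (c : ℝ) x, N (c • x) = |c| * N x)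
    (hN_add : ∀ x y, N (x + y) ≤ N x + N y)
    (f : EuclideanSpace ℝ (Fin d) → ℝ) (hf : ContDiff ℝ 2 f)
    (L0 L1 : ℝ) (hL0 : 0 ≤ L0) (hL1 : 0 < L1)
    (hrelax : ∀ x, inducedMatrixNorm N (fderiv ℝ (gradient f) x)
      ≤ L0 + L1 * dualNorm N (gradient f x)) :
    ∀ x x' : EuclideanSpace ℝ (Fin d), N (x' - x) ≤ 1 / L1 →
      f x' ≤ f x + (inner ℝ (gradient f x) (x' - x) : ℝ)
        + 1 / 2 * (5 * L0 + 4 * L1 * dualNorm N (gradient f x)) * (N (x' - x)) ^ 2 := by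
  intro x x' hxx'
  obtain ⟨c₁, hc₁, hc₁N⟩ := N_lower hN_def hN_smul hN_add
  set δ : EuclideanSpace ℝ (Fin d) := x' - x with hδdef
  have hNδ0 : 0 ≤ N δ := N_nonneg hN_def hN_smul hN_add δ
  have haNδ : L1 * N δ ≤ 1 := by
    rw [div_eq_mul_inv, one_mul] at hxx'
    calc L1 * N δ ≤ L1 * L1⁻¹ := mul_le_mul_of_nonneg_left hxx' hL1.le
      _ = 1 := mul_inv_cancel₀ hL1.ne'
  -- the path and its derivatives
  set γ : ℝ → EuclideanSpace ℝ (Fin d) := fun t => x + t • δ with hγdef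
  have hγ0 : γ 0 = x := by simp [hγdef]
  have hγ1 : γ 1 = x' := by rw [hγdef]; simp [hδdef]
  have hγcont : Continuous γ := continuous_const.add (continuous_id.smul continuous_const)
  have hγderiv : ∀ t : ℝ, HasDerivAt γ δ t := by
    intro t
    have h := ((hasDerivAt_id t).smul_const δ).const_add x
    simpa [hγdef] using h
  have hgrad : ContDiff ℝ 1 (gradient f) := contDiff_gradient hf
  have hgradc : Continuous (gradient f) := hgrad.continuous
  have hHc : Continuous (fun y => fderiv ℝ (gradient f) y) :=
    (hgrad.fderiv_right (m := 0) (by norm_num)).continuous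
  have hγd : ∀ t : ℝ, HasDerivAt (fun s => gradient f (γ s))
      ((fderiv ℝ (gradient f) (γ t)) δ) t := by
    intro t
    exact ((hgrad.differentiable one_ne_zero (γ t)).hasFDerivAt).comp_hasDerivAt t (hγderiv t)
  have hfd : ∀ t : ℝ, HasDerivAt (fun s => f (γ s))
      ((inner ℝ (gradient f (γ t)) δ : ℝ)) t := by
    intro t
    have h := ((hf.differentiable (by norm_num) (γ t)).hasFDerivAt).comp_hasDerivAt t (hγderiv t)
    rwa [fderiv_eq_inner_gradient] at h
  have hHδc : Continuous fun τ => (fderiv ℝ (gradient f) (γ τ)) δ :=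
    isBoundedBilinearMap_apply.continuous.comp ((hHc.comp hγcont).prodMk continuous_const)
  -- FTC for the gradient along the path
  have hFTC : ∀ s t : ℝ, (∫ τ in s..t, (fderiv ℝ (gradient f) (γ τ)) δ)
      = gradient f (γ t) - gradient f (γ s) := by
    intro s t
    exact intervalIntegral.integral_eq_sub_of_hasDerivAt (fun τ _ => hγd τ)
      (hHδc.intervalIntegrable s t)
  -- the dual norm of the gradient along the path
  set g : ℝ → ℝ := fun t => dualNorm N (gradient f (γ t)) with hgdef
  have hgcont : Continuous g :=
    dual_comp_continuous hN_def hc₁ hc₁N (hgradc.comp hγcont)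
  have hgnn : ∀ t, 0 ≤ g t := fun t => dual_nonneg hN_def hc₁ hc₁N _
  have hφcont : Continuous fun τ => (L0 + L1 * g τ) * N δ := by
    exact (continuous_const.add (continuous_const.mul hgcont)).mul continuous_const
  -- key pointwise bound on the integrand
  have hptw : ∀ τ : ℝ, dualNorm N ((fderiv ℝ (gradient f) (γ τ)) δ)
      ≤ (L0 + L1 * g τ) * N δ := by
    intro τ
    calc dualNorm N ((fderiv ℝ (gradient f) (γ τ)) δ)
        ≤ inducedMatrixNorm N (fderiv ℝ (gradient f) (γ τ)) * N δ :=
          dual_apply_le hN_def hN_smul hN_add hc₁ hc₁N _ _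
      _ ≤ (L0 + L1 * g τ) * N δ :=
          mul_le_mul_of_nonneg_right (hrelax (γ τ)) hNδ0
  -- key integral inequality
  have hKEY : ∀ s t : ℝ, s ≤ t →
      dualNorm N (gradient f (γ t) - gradient f (γ s))
        ≤ ∫ τ in s..t, (L0 + L1 * g τ) * N δ := by
    intro s t hst
    rw [← hFTC s t]
    exact dual_intervalIntegral_le hN_def hN_smul hN_add hc₁ hc₁N hHδc hφcont hst
      (fun τ _ => hptw τ)
  have hKEY2 : ∀ s t : ℝ, s ≤ t →
      g t ≤ g s + ∫ τ in s..t, (L0 + L1 * g τ) * N δ := by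
    intro s t hst
    have h1 := dual_sub hN_def hc₁ hc₁N (gradient f (γ t)) (gradient f (γ s))
    have h2 := hKEY s t hst
    have hgt : g t = dualNorm N (gradient f (γ t)) := rfl
    have hgs : g s = dualNorm N (gradient f (γ s)) := rfl
    rw [hgt, hgs]
    linarith
  -- integral bound when g is bounded
  have hInt : ∀ s t G : ℝ, s ≤ t → (∀ τ ∈ Set.Icc s t, g τ ≤ G) →
      g t ≤ g s + (t - s) * ((L0 + L1 * G) * N δ) := by
    intro s t G hst hG
    have h1 := hKEY2 s t hst
    have h2 : (∫ τ in s..t, (L0 + L1 * g τ) * N δ)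
        ≤ ∫ τ in s..t, (L0 + L1 * G) * N δ := by
      refine intervalIntegral.integral_mono_on hst (hφcont.intervalIntegrable s t)
        (intervalIntegrable_const) fun τ hτ => ?_
      have hmul : L1 * g τ ≤ L1 * G := mul_le_mul_of_nonneg_left (hG τ hτ) hL1.le
      exact mul_le_mul_of_nonneg_right (by linarith) hNδ0
    rw [intervalIntegral.integral_const, smul_eq_mul] at h2
    linarith
  -- bootstrap: bound g on [0, 1/2] and then on [1/2, 1]
  obtain ⟨t₁, ht₁m, ht₁max⟩ := (isCompact_Icc (a := (0:ℝ)) (b := 1/2)).exists_isMaxOn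
    ⟨0, by norm_num⟩ hgcont.continuousOn
  have ht₁max' : ∀ τ ∈ Set.Icc (0:ℝ) (1/2), g τ ≤ g t₁ := isMaxOn_iff.mp ht₁max
  have e₁ : g t₁ ≤ g 0 + (t₁ - 0) * ((L0 + L1 * g t₁) * N δ) :=
    hInt 0 t₁ (g t₁) ht₁m.1 (fun τ hτ => ht₁max' τ ⟨hτ.1, le_trans hτ.2 ht₁m.2⟩)
  have b₁ : g t₁ ≤ 2 * g 0 + L0 * N δ := by
    have h1 : 0 ≤ t₁ := ht₁m.1
    have h2 : t₁ ≤ 1/2 := ht₁m.2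
    nlinarith [hgnn t₁, hgnn 0, mul_nonneg hL0 hNδ0, mul_nonneg hL1.le hNδ0,
      mul_nonneg (mul_nonneg hL1.le hNδ0) (hgnn t₁)]
  obtain ⟨t₂, ht₂m, ht₂max⟩ := (isCompact_Icc (a := (1/2:ℝ)) (b := 1)).exists_isMaxOn
    ⟨1/2, by norm_num⟩ hgcont.continuousOn
  have ht₂max' : ∀ τ ∈ Set.Icc (1/2:ℝ) 1, g τ ≤ g t₂ := isMaxOn_iff.mp ht₂max
  have e₂ : g t₂ ≤ g (1/2) + (t₂ - 1/2) * ((L0 + L1 * g t₂) * N δ) :=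
    hInt (1/2) t₂ (g t₂) ht₂m.1 (fun τ hτ => ht₂max' τ ⟨hτ.1, le_trans hτ.2 ht₂m.2⟩)
  have hg12 : g (1/2) ≤ g t₁ := ht₁max' (1/2) ⟨by norm_num, le_refl _⟩
  have b₂ : g t₂ ≤ 4 * g 0 + 3 * (L0 * N δ) := by
    have h1 : (1/2:ℝ) ≤ t₂ := ht₂m.1
    have h2 : t₂ ≤ 1 := ht₂m.2
    nlinarith [hgnn t₂, hgnn 0, mul_nonneg hL0 hNδ0, mul_nonneg hL1.le hNδ0,
      mul_nonneg (mul_nonneg hL1.le hNδ0) (hgnn t₂)]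
  have GB : ∀ τ ∈ Set.Icc (0:ℝ) 1, g τ ≤ 4 * g 0 + 3 * (L0 * N δ) := by
    intro τ hτ
    rcases le_total τ (1/2) with h | h
    · have := ht₁max' τ ⟨hτ.1, h⟩
      have := hgnn 0
      have := mul_nonneg hL0 hNδ0
      linarith
    · have := ht₂max' τ ⟨h, hτ.2⟩
      linarith
  -- final assembly
  have hintc : Continuous fun t => (inner ℝ (gradient f (γ t)) δ : ℝ) :=
    (hgradc.comp hγcont).inner continuous_const
  have hFTCf : (∫ t in (0:ℝ)..1, (inner ℝ (gradient f (γ t)) δ : ℝ)) = f x' - f x := by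
    rw [intervalIntegral.integral_eq_sub_of_hasDerivAt (fun τ _ => hfd τ)
      (hintc.intervalIntegrable 0 1), hγ0, hγ1]
  set K : ℝ := (4 * L0 + 4 * (L1 * g 0)) * (N δ) ^ 2 with hKdef
  have hintc2 : Continuous fun t => (inner ℝ (gradient f (γ t) - gradient f x) δ : ℝ) :=
    ((hgradc.comp hγcont).sub continuous_const).inner continuous_const
  have hsplit : f x' - f x - (inner ℝ (gradient f x) δ : ℝ)
      = ∫ t in (0:ℝ)..1, (inner ℝ (gradient f (γ t) - gradient f x) δ : ℝ) := by
    have hfun : (fun t => (inner ℝ (gradient f (γ t) - gradient f x) δ : ℝ))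
        = fun t => (inner ℝ (gradient f (γ t)) δ : ℝ) - (inner ℝ (gradient f x) δ : ℝ) := by
      funext t; rw [inner_sub_left]
    rw [hfun, intervalIntegral.integral_sub (hintc.intervalIntegrable 0 1)
      (intervalIntegrable_const), hFTCf, intervalIntegral.integral_const]
    simp only [sub_zero, one_smul]
  have hbound : ∀ t ∈ Set.Icc (0:ℝ) 1,
      (inner ℝ (gradient f (γ t) - gradient f x) δ : ℝ) ≤ t * K := by
    intro t ht
    have h1 : (inner ℝ (gradient f (γ t) - gradient f x) δ : ℝ)
        ≤ dualNorm N (gradient f (γ t) - gradient f x) * N δ :=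
      inner_le_dual_mul hN_def hN_smul hN_add hc₁ hc₁N _ _
    have h2 : dualNorm N (gradient f (γ t) - gradient f x)
        ≤ ∫ τ in (0:ℝ)..t, (L0 + L1 * g τ) * N δ := by
      have := hKEY 0 t ht.1
      rwa [hγ0] at this
    have h3 : (∫ τ in (0:ℝ)..t, (L0 + L1 * g τ) * N δ)
        ≤ t * ((4 * L0 + 4 * (L1 * g 0)) * N δ) := by
      have hmono : (∫ τ in (0:ℝ)..t, (L0 + L1 * g τ) * N δ)
          ≤ ∫ τ in (0:ℝ)..t, (4 * L0 + 4 * (L1 * g 0)) * N δ := by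
        refine intervalIntegral.integral_mono_on ht.1 (hφcont.intervalIntegrable 0 t)
          (intervalIntegrable_const) fun τ hτ => ?_
        have hGB := GB τ ⟨hτ.1, le_trans hτ.2 ht.2⟩
        have hmul1 : L1 * g τ ≤ L1 * (4 * g 0 + 3 * (L0 * N δ)) :=
          mul_le_mul_of_nonneg_left hGB hL1.le
        have hmul2 : L0 * (L1 * N δ) ≤ L0 * 1 := mul_le_mul_of_nonneg_left haNδ hL0
        have hlin : L0 + L1 * g τ ≤ 4 * L0 + 4 * (L1 * g 0) := by nlinarith
        exact mul_le_mul_of_nonneg_right hlin hNδ0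
      rw [intervalIntegral.integral_const, smul_eq_mul, sub_zero] at hmono
      exact hmono
    have hD0 : 0 ≤ dualNorm N (gradient f (γ t) - gradient f x) :=
      dual_nonneg hN_def hc₁ hc₁N _
    calc (inner ℝ (gradient f (γ t) - gradient f x) δ : ℝ)
        ≤ dualNorm N (gradient f (γ t) - gradient f x) * N δ := h1
      _ ≤ (t * ((4 * L0 + 4 * (L1 * g 0)) * N δ)) * N δ :=
          mul_le_mul_of_nonneg_right (le_trans h2 h3) hNδ0
      _ = t * K := by rw [hKdef]; ring
  have hfin : (∫ t in (0:ℝ)..1, (inner ℝ (gradient f (γ t) - gradient f x) δ : ℝ))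
      ≤ ∫ t in (0:ℝ)..1, t * K := by
    refine intervalIntegral.integral_mono_on (by norm_num) (hintc2.intervalIntegrable 0 1)
      ((continuous_id.mul continuous_const).intervalIntegrable 0 1) hbound
  have hval : (∫ t in (0:ℝ)..1, t * K) = K / 2 := by
    rw [intervalIntegral.integral_mul_const, integral_id]
    ring
  have hg0 : g 0 = dualNorm N (gradient f x) := by rw [hgdef]; simp [hγ0]
  have hfinal : K / 2 ≤ 1 / 2 * (5 * L0 + 4 * L1 * dualNorm N (gradient f x)) * (N δ) ^ 2 := by
    rw [hKdef, ← hg0]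
    nlinarith [sq_nonneg (N δ), hL0]
  rw [hval] at hfin
  have hmain : f x' - f x - (inner ℝ (gradient f x) δ : ℝ) ≤ K / 2 := by
    rw [hsplit]; exact hfin
  linarith [hfinal, hmain]

/-- If `f` is twice continuously differentiable and `(L⁰, L¹)`-relaxed smooth w.r.t. a norm
`N`, then for `N(x' - x) ≤ 1/L¹` one has the local quadratic bound
`f(x') ≤ f(x) + ⟪∇f(x), x' - x⟫ + (1/2)(5L⁰ + 4L¹ ‖∇f(x)‖_*) N(x' - x)²`. -/
theorem relaxed_smoothness_quadratic_bound {d : ℕ}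
    (N : EuclideanSpace ℝ (Fin d) → ℝ)
    (hN_def : ∀ x, N x = 0 ↔ x = 0)
    (hN_smul : ∀ (c : ℝ) x, N (c • x) = |c| * N x)
    (hN_add : ∀ x y, N (x + y) ≤ N x + N y)
    (f : EuclideanSpace ℝ (Fin d) → ℝ) (hf : ContDiff ℝ 2 f)
    (L0 L1 : ℝ) (hL0 : 0 ≤ L0) (hL1 : 0 < L1)
    (hrelax : ∀ x, inducedMatrixNorm N (fderiv ℝ (gradient f) x)
      ≤ L0 + L1 * dualNorm N (gradient f x)) :
    ∀ x x' : EuclideanSpace ℝ (Fin d), N (x' - x) ≤ 1 / L1 →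
      f x' ≤ f x + (inner ℝ (gradient f x) (x' - x) : ℝ)
        + 1 / 2 * (5 * L0 + 4 * L1 * dualNorm N (gradient f x)) * (N (x' - x)) ^ 2 :=
  relaxed_aux N hN_def hN_smul hN_add f hf L0 L1 hL0 hL1 hrelax
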